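/- Let T be a tree and P_T the lattice of subtrees of T ordered by inclusion. The meet-irreducible elements of P_T other than 0̂ and 1̂ are exactly the subtrees T_{i,1} and T_{i,2} obtained as the two connected components of T after deleting a single edge e_i. -/

import Mathlib

open scoped Classical

/-- Monomials in variables `V`, represented by exponent vectors.
Multiplication is `+`, divisibility is `≤`, gcd is `⊓`, lcm is `⊔`, and the
trivial monomial `1` is `0`. -/
abbrev Monomial (V : Type*) := V →₀ ℕ

/-- An element `x` is meet-irreducible if `x ≠ ⊤` and `x ≠ a ⊓ b` for all `a, b > x`. -/
def MeetIrred {P : Type*} [Lattice P] [OrderTop P] (x : P) : Prop :=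
  x ≠ ⊤ ∧ ∀ a b : P, x < a → x < b → x ≠ a ⊓ b

/-- A finite lattice is atomic if every element other than `⊥` is the join of
the atoms below it. -/
def IsFinAtomic (P : Type*) [Lattice P] [BoundedOrder P] : Prop :=
  ∀ p : P, p ≠ ⊥ → IsLUB {a : P | IsAtom a ∧ a ≤ p} p

/-- The monomial `x(a) = ∏_{p ∈ (⌈a⌉)ᶜ} m_p` attached to `a` by a labeling `m`. -/
noncomputable def coordGen {P V : Type*} [PartialOrder P] [Fintype P]
    (m : P → Monomial V) (a : P) : Monomial V :=
  ∑ p ∈ Finset.univ.filter (fun p : P => ¬ a ≤ p), m p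

/-- The lcm lattice of a finite family of monomials: all least common multiples
of subsets of the family (the empty lcm being `1`), ordered by divisibility. -/
abbrev LcmLat {ι V : Type*} [Fintype ι] (g : ι → Monomial V) : Type _ :=
  {l : Monomial V // ∃ s : Finset ι, l = s.sup g}

/-- Condition (C1): every meet-irreducible element has a nontrivial label. -/
def CondC1 {P V : Type*} [Lattice P] [BoundedOrder P] (m : P → Monomial V) : Prop :=
  ∀ p : P, MeetIrred p → m p ≠ 0

/-- Condition (C2): labels with a common variable sit on comparable elements. -/
def CondC2 {P V : Type*} [PartialOrder P] (m : P → Monomial V) : Prop :=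
  ∀ p q : P, m p ⊓ m q ≠ 0 → p ≤ q ∨ q ≤ p

/-- A labeling is a coordinatization if the lcm lattice of the ideal generated
by the monomials `x(a)`, for `a` ranging over the atoms, is isomorphic to `P`. -/
def IsCoordinatization {P V : Type*} [PartialOrder P] [OrderBot P] [Fintype P]
    (m : P → Monomial V) : Prop :=
  Nonempty (P ≃o LcmLat (fun a : {a : P // IsAtom a} => coordGen m a.val))

section Trees

variable {V : Type*} [Fintype V] (G : SimpleGraph V)

/-- The poset `P_T` of subtrees of `T`: finite sets of vertices whose induced
subgraph is (pre)connected, ordered by inclusion.  This includes the empty set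
and all single vertices. -/
abbrev SubtreePoset (G : SimpleGraph V) : Type _ :=
  {s : Finset V // (G.induce (↑s : Set V)).Preconnected}

noncomputable instance : Fintype (SubtreePoset G) := Fintype.ofFinite _

/-- The single-vertex subtree `{v}`, an atom of `P_T`. -/
def vertexSubtree (v : V) : SubtreePoset G :=
  ⟨{v}, by
    rintro ⟨a, ha⟩ ⟨b, hb⟩
    simp only [Finset.coe_singleton, Set.mem_singleton_iff] at ha hb
    subst ha; subst hb
    exact SimpleGraph.Reachable.refl _⟩

/-- The empty subtree, the minimum of `P_T`. -/
def emptySubtree : SubtreePoset G :=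
  ⟨∅, by rintro ⟨a, ha⟩; simp at ha⟩

end Trees


namespace StmtAux
open SimpleGraph

variable {V : Type*} {G : SimpleGraph V}

/-- Lift reachability in an induced subgraph along a set inclusion. -/
lemma reach_mono {s t : Set V} (hst : s ⊆ t) {x y : V} (hx : x ∈ s) (hy : y ∈ s)
    (h : (G.induce s).Reachable ⟨x, hx⟩ ⟨y, hy⟩) :
    (G.induce t).Reachable ⟨x, hst hx⟩ ⟨y, hst hy⟩ := by
  exact h.map ⟨Set.inclusion hst, fun {a b} hab => hab⟩

/-- Adding a vertex adjacent to a vertex of a preconnected set keeps it preconnected. -/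
lemma preconn_insert {s : Set V} (hs : (G.induce s).Preconnected) {u v : V}
    (hu : u ∈ s) (huv : G.Adj u v) : (G.induce (insert v s)).Preconnected := by
  have key : ∀ a : V, ∀ ha : a ∈ insert v s,
      (G.induce (insert v s)).Reachable ⟨a, ha⟩ ⟨v, Set.mem_insert v s⟩ := by
    intro a ha
    rcases ha with rfl | ha
    · rfl
    · have h1 : (G.induce (insert v s)).Reachable ⟨a, Set.mem_insert_of_mem v ha⟩
          ⟨u, Set.mem_insert_of_mem v hu⟩ :=
        reach_mono (Set.subset_insert v s) ha hu (hs ⟨a, ha⟩ ⟨u, hu⟩)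
      refine h1.trans (Adj.reachable ?_)
      exact huv
  rintro ⟨a, ha⟩ ⟨b, hb⟩
  exact (key a ha).trans (key b hb).symm

/-- A walk inside a set not containing `v` avoids any edge incident to `v`. -/
lemma reach_deleteEdges {s : Set V} {u v : V} (hv : v ∉ s) {x y : V} (hx : x ∈ s)
    (hy : y ∈ s) (h : (G.induce s).Reachable ⟨x, hx⟩ ⟨y, hy⟩) :
    (G.deleteEdges {s(u, v)}).Reachable x y := by
  refine h.map (⟨Subtype.val, ?_⟩ : G.induce s →g G.deleteEdges {s(u, v)})
  rintro ⟨a, ha⟩ ⟨b, hb⟩ hab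
  rw [SimpleGraph.deleteEdges_adj]
  refine ⟨hab, ?_⟩
  simp only [Set.mem_singleton_iff, Sym2.eq_iff]
  rintro (⟨rfl, rfl⟩ | ⟨rfl, rfl⟩)
  · exact hv hb
  · exact hv ha

/-- A walk from inside `s` to outside `s` crosses an edge of the graph. -/
lemma crossing {H : SimpleGraph V} {s : Set V} {x y : V} (W : H.Walk x y)
    (hx : x ∈ s) (hy : y ∉ s) : ∃ a ∈ s, ∃ b, b ∉ s ∧ H.Adj a b := by
  induction W with
  | nil => exact absurd hx hy
  | @cons c d e h W ih =>
    by_cases hd : d ∈ s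
    · exact ih hd hy
    · exact ⟨c, hx, d, hd, h⟩

/-- In an acyclic graph, two distinct vertices of a preconnected set cannot
both be adjacent to the same outside vertex. -/
lemma no_two_edges (hacyc : G.IsAcyclic) {s : Set V} (hs : (G.induce s).Preconnected)
    {u₁ u₂ v : V} (hu₁ : u₁ ∈ s) (hu₂ : u₂ ∈ s) (hv : v ∉ s) (h1 : G.Adj u₁ v)
    (h2 : G.Adj u₂ v) (hne : u₁ ≠ u₂) : False := by
  classical
  obtain ⟨W0⟩ := hs ⟨u₁, hu₁⟩ ⟨u₂, hu₂⟩
  let W : G.Walk u₁ u₂ := W0.map (⟨Subtype.val, fun {a b} hab => hab⟩ : G.induce s →g G)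
  have hWs : ∀ z ∈ W.support, z ∈ s := by
    intro z hz
    rw [Walk.support_map, List.mem_map] at hz
    obtain ⟨⟨z', hz'⟩, _, rfl⟩ := hz
    exact hz'
  have hvP : v ∉ W.bypass.support := fun hmem =>
    hv (hWs v (W.support_bypass_subset hmem))
  have hQ1 : (Walk.cons h1.symm W.bypass).IsPath := by
    rw [Walk.cons_isPath_iff]
    exact ⟨W.bypass_isPath, hvP⟩
  have hQ2 : (Walk.cons h2.symm Walk.nil).IsPath := by
    rw [Walk.cons_isPath_iff]
    refine ⟨Walk.IsPath.nil, ?_⟩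
    simp only [Walk.support_nil, List.mem_singleton]
    rintro rfl; exact hv hu₂
  have := hacyc.path_unique ⟨Walk.cons h1.symm W.bypass, hQ1⟩ ⟨Walk.cons h2.symm Walk.nil, hQ2⟩
  have hsup : (Walk.cons h1.symm W.bypass).support = (Walk.cons h2.symm Walk.nil).support :=
    congrArg (fun q : G.Path v u₂ => q.val.support) this
  have hu1mem : u₁ ∈ (Walk.cons h1.symm W.bypass).support := by
    simp [Walk.support_cons, Walk.start_mem_support]
  rw [hsup] at hu1mem
  simp only [Walk.support_cons, Walk.support_nil, List.mem_cons, List.mem_singleton,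
    List.not_mem_nil, or_false] at hu1mem
  rcases hu1mem with rfl | rfl
  · exact hv hu₁
  · exact hne rfl

end StmtAux

/-- in the subtree lattice `P_T` of a tree `T`, the
meet-irreducible elements other than `0̂ = ∅` and `1̂ = T` are exactly the
connected components `T_{i,1}, T_{i,2}` of `T` with one edge `e_i` deleted.
Meet-irreducibility of `p` is expressed order-theoretically: `p` is not the
greatest lower bound of two strictly larger elements. -/
theorem stmt9 {V : Type*} [Fintype V] (G : SimpleGraph V)
    (hconn : G.Connected) (hacyc : G.IsAcyclic) :
    ∀ p : SubtreePoset G, p.val ≠ ∅ → p.val ≠ Finset.univ →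
      ((∀ a b : SubtreePoset G, p < a → p < b → ¬ IsGLB {a, b} p) ↔
        ∃ u v : V, G.Adj u v ∧
          (↑p.val : Set V) = {w | (G.deleteEdges {s(u, v)}).Reachable u w}) := by
  classical
  intro p hne huniv
  constructor
  · intro hirr
    obtain ⟨x, hx⟩ := Finset.nonempty_iff_ne_empty.mpr hne
    obtain ⟨y, hy⟩ : ∃ y, y ∉ p.val := by
      by_contra h
      push_neg at h
      exact huniv (Finset.eq_univ_iff_forall.mpr h)
    obtain ⟨W⟩ := hconn.preconnected x y
    obtain ⟨u0, hu0, v0, hv0, hadj⟩ := StmtAux.crossing (s := (↑p.val : Set V)) W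
      (by simpa using hx) (by simpa using hy)
    have hN : ∀ w₁ w₂ : V, w₁ ∉ (↑p.val : Set V) → w₂ ∉ (↑p.val : Set V) →
        (∃ u ∈ (↑p.val : Set V), G.Adj u w₁) → (∃ u ∈ (↑p.val : Set V), G.Adj u w₂) →
        w₁ = w₂ := by
      rintro w₁ w₂ hw₁ hw₂ ⟨x₁, hx₁, ha₁⟩ ⟨x₂, hx₂, ha₂⟩
      by_contra hne12
      have hca : (G.induce (↑(insert w₁ p.val) : Set V)).Preconnected := by
        rw [Finset.coe_insert]
        exact StmtAux.preconn_insert p.2 hx₁ ha₁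
      have hcb : (G.induce (↑(insert w₂ p.val) : Set V)).Preconnected := by
        rw [Finset.coe_insert]
        exact StmtAux.preconn_insert p.2 hx₂ ha₂
      have hw₁' : w₁ ∉ p.val := by simpa using hw₁
      have hw₂' : w₂ ∉ p.val := by simpa using hw₂
      refine hirr ⟨insert w₁ p.val, hca⟩ ⟨insert w₂ p.val, hcb⟩ ?_ ?_ ?_
      · exact Subtype.coe_lt_coe.mp (Finset.lt_iff_ssubset.mpr (Finset.ssubset_insert hw₁'))
      · exact Subtype.coe_lt_coe.mp (Finset.lt_iff_ssubset.mpr (Finset.ssubset_insert hw₂'))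
      · constructor
        · rintro c (rfl | rfl)
          · exact Subtype.coe_le_coe.mp (Finset.le_iff_subset.mpr (Finset.subset_insert _ _))
          · exact Subtype.coe_le_coe.mp (Finset.le_iff_subset.mpr (Finset.subset_insert _ _))
        · intro c hc
          have h1 : c.val ⊆ insert w₁ p.val :=
            Finset.le_iff_subset.mp (Subtype.coe_le_coe.mpr (hc (Set.mem_insert _ _)))
          have h2 : c.val ⊆ insert w₂ p.val :=
            Finset.le_iff_subset.mp (Subtype.coe_le_coe.mpr
              (hc (Set.mem_insert_of_mem _ rfl)))
          refine Subtype.coe_le_coe.mp (Finset.le_iff_subset.mpr fun z hz => ?_)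
          rcases Finset.mem_insert.mp (h1 hz) with rfl | hzp
          · rcases Finset.mem_insert.mp (h2 hz) with rfl | hzp
            · exact absurd rfl hne12
            · exact hzp
          · exact hzp
    refine ⟨u0, v0, hadj, Set.ext fun z => ⟨fun hz => ?_, fun hz => ?_⟩⟩
    · exact StmtAux.reach_deleteEdges (u := u0) hv0 hu0 hz (p.2 ⟨u0, hu0⟩ ⟨z, hz⟩)
    · by_contra hzp
      obtain ⟨W'⟩ := hz
      obtain ⟨a0, ha0, b0, hb0, hab⟩ :=
        StmtAux.crossing (s := (↑p.val : Set V)) W' hu0 hzp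
      rw [SimpleGraph.deleteEdges_adj] at hab
      obtain ⟨hab', hedge⟩ := hab
      have hb0v : b0 = v0 := hN b0 v0 hb0 hv0 ⟨a0, ha0, hab'⟩ ⟨u0, hu0, hadj⟩
      subst hb0v
      have hane : a0 ≠ u0 := by
        rintro rfl
        exact hedge rfl
      exact StmtAux.no_two_edges hacyc p.2 ha0 hu0 hv0 hab' hadj hane
  · rintro ⟨u, v, huv, hset⟩ a b hpa hpb hglb
    have hu : u ∈ (↑p.val : Set V) := by
      rw [hset]
      exact SimpleGraph.Reachable.refl u
    have hv : v ∉ (↑p.val : Set V) := by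
      intro hvp
      rw [hset] at hvp
      have hbridge := (SimpleGraph.isAcyclic_iff_forall_edge_isBridge.mp hacyc)
        (show s(u, v) ∈ G.edgeSet from huv)
      exact (SimpleGraph.isBridge_iff.mp hbridge) hvp
    have key : ∀ c : SubtreePoset G, p < c → v ∈ c.val ∧ p.val ⊆ c.val := by
      intro c hpc
      have hlt : p.val ⊂ c.val := Finset.lt_iff_ssubset.mp (Subtype.coe_lt_coe.mpr hpc)
      have hsub : p.val ⊆ c.val := hlt.subset
      refine ⟨?_, hsub⟩
      obtain ⟨w, hwc, hwp⟩ := Finset.exists_of_ssubset hlt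
      by_contra hvc
      have hvc' : v ∉ (↑c.val : Set V) := by simpa using hvc
      have huc : u ∈ (↑c.val : Set V) := by
        simpa using hsub (by simpa using hu)
      have hwc' : w ∈ (↑c.val : Set V) := by simpa using hwc
      have hreach := StmtAux.reach_deleteEdges (u := u) hvc' huc hwc'
        (c.2 ⟨u, huc⟩ ⟨w, hwc'⟩)
      have : w ∈ (↑p.val : Set V) := by rw [hset]; exact hreach
      exact hwp (by simpa using this)
    have hq : (G.induce (↑(insert v p.val) : Set V)).Preconnected := by
      rw [Finset.coe_insert]
      exact StmtAux.preconn_insert p.2 hu huv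
    have hlow : (⟨insert v p.val, hq⟩ : SubtreePoset G) ∈ lowerBounds {a, b} := by
      rintro c (rfl | rfl)
      · exact Subtype.coe_le_coe.mp (Finset.le_iff_subset.mpr
          (Finset.insert_subset (key _ hpa).1 (key _ hpa).2))
      · exact Subtype.coe_le_coe.mp (Finset.le_iff_subset.mpr
          (Finset.insert_subset (key _ hpb).1 (key _ hpb).2))
    have := hglb.2 hlow
    have hvsub : insert v p.val ⊆ p.val := Finset.le_iff_subset.mp (Subtype.coe_le_coe.mpr this)
    exact hv (by simpa using hvsub (Finset.mem_insert_self v p.val))
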